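/- Let k ≥ 2 and let ω : Fin k → ℝ be a weight vector. Then T_1(P_{n,ω}) = 0 for all n ≥ 1 if and only if ω₂ = 2ω₁. (The first two components of the weight vector completely determine the kernel of T_1 on the WIP-module.) -/

import Mathlib

open MvPolynomial Finset

/-- The weight coefficient `A_ω(α)` of Theorem 2.1 (for `α ≠ 0`):
`A_ω(α) = multinomial(α) · (Σ α_i ω_i) / (Σ α_i)`. -/
noncomputable def Aw {k : ℕ} (ω : Fin k → ℝ) (α : Fin k → ℕ) : ℝ :=
  (Nat.multinomial Finset.univ α : ℝ) * (∑ i, (α i : ℝ) * ω i) / (∑ i, (α i : ℝ))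

/-- The isobaric degree `Σ_{i=1}^k i·α_i` of an exponent vector. -/
def isoDeg {k : ℕ} (α : Fin k → ℕ) : ℕ := ∑ i, (i.1 + 1) * α i

/-- The (finite) set of exponent vectors of isobaric degree `n`. -/
def wipIndex (k n : ℕ) : Finset (Fin k → ℕ) :=
  (Fintype.piFinset fun _ : Fin k => Finset.range (n + 1)).filter fun α => isoDeg α = n

/-- The weighted isobaric polynomial `P_{n,ω} = Σ_α A_ω(α)·t^α`. -/
noncomputable def WIP (k n : ℕ) (ω : Fin k → ℝ) : MvPolynomial (Fin k) ℝ :=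
  ∑ α ∈ wipIndex k n, MvPolynomial.monomial (Finsupp.equivFunOnFinite.symm α) (Aw ω α)

/-- The operator `T_m(P) = D₁₁P − Σ_j t_j D_{2j}P − m·D₂P`. -/
noncomputable def Tm (k : ℕ) (hk : 2 ≤ k) (m : ℝ) (P : MvPolynomial (Fin k) ℝ) :
    MvPolynomial (Fin k) ℝ :=
  pderiv (⟨0, by omega⟩ : Fin k) (pderiv (⟨0, by omega⟩ : Fin k) P)
    - ∑ j : Fin k, X j * pderiv (⟨1, by omega⟩ : Fin k) (pderiv j P)
    - C m * pderiv (⟨1, by omega⟩ : Fin k) P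

/-- The `j`-th element `γ^{(j)}` of the string generated by `γ`. -/
def strElem (k : ℕ) (hk : 2 ≤ k) (γ : Fin k → ℕ) (j : ℕ) : Fin k → ℕ :=
  fun i => if i = (⟨0, by omega⟩ : Fin k) then γ i + 2 * j
    else if i = (⟨1, by omega⟩ : Fin k) then γ i - j else γ i

/-- The `ω`-weighted string generated by `γ`:
`S_ω(γ) = Σ_{j=0}^{γ₂} A_ω(γ^{(j)})·t^{γ^{(j)}}`. -/
noncomputable def strPoly (k : ℕ) (hk : 2 ≤ k) (ω : Fin k → ℝ) (γ : Fin k → ℕ) :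
    MvPolynomial (Fin k) ℝ :=
  ∑ j ∈ Finset.range (γ (⟨1, by omega⟩ : Fin k) + 1),
    MvPolynomial.monomial (Finsupp.equivFunOnFinite.symm (strElem k hk γ j))
      (Aw ω (strElem k hk γ j))

/-! ### Auxiliary lemmas -/

open Nat in
lemma prod_factorial_add_single {k : ℕ} (β : Fin k → ℕ) (a : Fin k) :
    ∏ i, ((β + Pi.single a 1 : Fin k → ℕ) i)! = (β a + 1) * ∏ i, (β i)! := by
  have hβ : (fun i => ((β + Pi.single a 1 : Fin k → ℕ) i)!) =
      Function.update (fun i => (β i)!) a ((β a + 1)!) := by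
    funext i
    by_cases h : i = a <;> simp [h, Pi.single_apply, Function.update]
  calc ∏ i, ((β + Pi.single a 1 : Fin k → ℕ) i)!
      = ∏ i, Function.update (fun i => (β i)!) a ((β a + 1)!) i := by rw [hβ]
    _ = (β a + 1)! * ∏ i ∈ Finset.univ \ {a}, (β i)! :=
        Finset.prod_update_of_mem (Finset.mem_univ a) _ _
    _ = (β a + 1) * ((β a)! * ∏ i ∈ Finset.univ \ {a}, (β i)!) := by
        rw [Nat.factorial_succ]; ring
    _ = (β a + 1) * ∏ i, (β i)! := by
        rw [show (∏ i, (β i)!) = (β a)! * ∏ i ∈ Finset.univ \ {a}, (β i)! from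
          Finset.prod_eq_mul_prod_sdiff_singleton_of_mem (Finset.mem_univ a) fun i => (β i)!]

open Nat in
lemma multinomial_add_single {k : ℕ} (β : Fin k → ℕ) (a : Fin k) :
    Nat.multinomial Finset.univ (β + Pi.single a 1) * (β a + 1) =
      ((∑ i, β i) + 1) * Nat.multinomial Finset.univ β := by
  have hP : (0:ℕ) < ∏ i, (β i)! := Finset.prod_pos fun i _ => Nat.factorial_pos _
  have hs : ∑ i, (β + Pi.single a 1 : Fin k → ℕ) i = (∑ i, β i) + 1 := by
    simp [Finset.sum_add_distrib, Finset.sum_pi_single']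
  refine Nat.eq_of_mul_eq_mul_left hP ?_
  calc (∏ i, (β i)!) * (Nat.multinomial Finset.univ (β + Pi.single a 1) * (β a + 1))
      = (∏ i, ((β + Pi.single a 1 : Fin k → ℕ) i)!)
          * Nat.multinomial Finset.univ (β + Pi.single a 1) := by
        rw [prod_factorial_add_single]; ring
    _ = (∑ i, (β + Pi.single a 1 : Fin k → ℕ) i)! := Nat.multinomial_spec _ _
    _ = ((∑ i, β i) + 1)! := by rw [hs]
    _ = ((∑ i, β i) + 1) * (∑ i, β i)! := Nat.factorial_succ _
    _ = ((∑ i, β i) + 1) * ((∏ i, (β i)!) * Nat.multinomial Finset.univ β) := by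
        rw [Nat.multinomial_spec]
    _ = (∏ i, (β i)!) * (((∑ i, β i) + 1) * Nat.multinomial Finset.univ β) := by ring

lemma single_two {k : ℕ} (a : Fin k) :
    (Pi.single a 2 : Fin k → ℕ) = Pi.single a 1 + Pi.single a 1 := by
  rw [← Pi.single_add]

lemma multinomial_add_single2 {k : ℕ} (β : Fin k → ℕ) (a : Fin k) :
    Nat.multinomial Finset.univ (β + Pi.single a 2) * ((β a + 2) * (β a + 1)) =
      (((∑ i, β i) + 2) * ((∑ i, β i) + 1)) * Nat.multinomial Finset.univ β := by
  have h1 := multinomial_add_single (β + Pi.single a 1) a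
  have h0 := multinomial_add_single β a
  have e1 : β + Pi.single a 2 = (β + Pi.single a 1) + Pi.single a 1 := by
    rw [single_two]; ring
  have e2 : (β + Pi.single a 1 : Fin k → ℕ) a = β a + 1 := by simp
  have e3 : ∑ i, (β + Pi.single a 1 : Fin k → ℕ) i = (∑ i, β i) + 1 := by
    simp [Finset.sum_add_distrib, Finset.sum_pi_single']
  rw [e1]
  calc Nat.multinomial Finset.univ ((β + Pi.single a 1) + Pi.single a 1) * ((β a + 2) * (β a + 1))
      = (Nat.multinomial Finset.univ ((β + Pi.single a 1) + Pi.single a 1)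
          * ((β + Pi.single a 1 : Fin k → ℕ) a + 1)) * (β a + 1) := by rw [e2]; ring
    _ = ((∑ i, (β + Pi.single a 1 : Fin k → ℕ) i) + 1)
          * Nat.multinomial Finset.univ (β + Pi.single a 1) * (β a + 1) := by rw [h1]
    _ = ((∑ i, β i) + 2) * (Nat.multinomial Finset.univ (β + Pi.single a 1) * (β a + 1)) := by
        rw [e3]; ring
    _ = (((∑ i, β i) + 2) * ((∑ i, β i) + 1)) * Nat.multinomial Finset.univ β := by
        rw [h0]; ring

lemma cast_sum_add_single {k : ℕ} (β : Fin k → ℕ) (a : Fin k) (c : ℕ) :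
    ∑ i, ((β + Pi.single a c : Fin k → ℕ) i : ℝ) = (∑ i, (β i : ℝ)) + c := by
  simp only [Pi.add_apply, Nat.cast_add, Finset.sum_add_distrib]
  congr 1
  rw [Finset.sum_eq_single a (fun i _ h => by simp [Pi.single_apply, h]) (by simp)]
  simp

lemma cast_sum_mul_add_single {k : ℕ} (ω : Fin k → ℝ) (β : Fin k → ℕ) (a : Fin k) (c : ℕ) :
    ∑ i, ((β + Pi.single a c : Fin k → ℕ) i : ℝ) * ω i = (∑ i, (β i : ℝ) * ω i) + c * ω a := by
  simp only [Pi.add_apply, Nat.cast_add, add_mul, Finset.sum_add_distrib]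
  congr 1
  rw [Finset.sum_eq_single a (fun i _ h => by simp [Pi.single_apply, h]) (by simp)]
  simp

lemma bracket {k : ℕ} (ω : Fin k → ℝ) (a b : Fin k) (β : Fin k → ℕ) :
    Aw ω (β + Pi.single a 2) * (((β a + 2) * (β a + 1) : ℕ) : ℝ)
      - Aw ω (β + Pi.single b 1) * ((((β b + 1) * ((∑ i, β i) + 1) : ℕ)) : ℝ)
    = (2 * ω a - ω b) * ((((∑ i, β i) + 1) * Nat.multinomial Finset.univ β : ℕ) : ℝ) := by
  have hMa : ((Nat.multinomial Finset.univ (β + Pi.single a 2) : ℕ) : ℝ)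
      * (((β a : ℝ) + 2) * ((β a : ℝ) + 1))
      = (((∑ i, (β i : ℝ)) + 2) * ((∑ i, (β i : ℝ)) + 1)) * (Nat.multinomial Finset.univ β : ℝ) := by
    have := congrArg (fun n : ℕ => (n : ℝ)) (multinomial_add_single2 β a)
    push_cast at this
    linarith [this]
  have hMb : ((Nat.multinomial Finset.univ (β + Pi.single b 1) : ℕ) : ℝ) * ((β b : ℝ) + 1)
      = ((∑ i, (β i : ℝ)) + 1) * (Nat.multinomial Finset.univ β : ℝ) := by
    have := congrArg (fun n : ℕ => (n : ℝ)) (multinomial_add_single β b)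
    push_cast at this
    linarith [this]
  have h2 : (∑ i, (β i : ℝ)) + 2 ≠ 0 := by positivity
  have h1 : (∑ i, (β i : ℝ)) + 1 ≠ 0 := by positivity
  unfold Aw
  rw [cast_sum_add_single, cast_sum_add_single, cast_sum_mul_add_single, cast_sum_mul_add_single]
  push_cast
  field_simp
  linear_combination (∑ i, (β i : ℝ) * ω i + 2 * ω a) * hMa
    - ((∑ i, (β i : ℝ)) + 2) * (∑ i, (β i : ℝ) * ω i + ω b) * hMb

lemma nat_sum_identity {k : ℕ} (α : Fin k → ℕ) (b : Fin k) :
    (∑ j, α j * (α b - if j = b then 1 else 0)) + α b = α b * ∑ j, α j := by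
  rw [← Finset.add_sum_erase _ _ (Finset.mem_univ b),
      ← Finset.add_sum_erase _ (fun j => α j) (Finset.mem_univ b)]
  simp only [if_pos rfl, eq_self_iff_true, if_true]
  have h : ∀ j ∈ Finset.univ.erase b, α j * (α b - if j = b then 1 else 0) = α j * α b := by
    intro j hj; rw [if_neg (Finset.mem_erase.1 hj).1]; simp
  rw [Finset.sum_congr rfl h, ← Finset.sum_mul]
  cases' h0 : α b with n
  · simp
  · simp only [Nat.add_sub_cancel]
    ring

lemma sub_single_apply {k : ℕ} (α : Fin k → ℕ) (j b : Fin k) :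
    (Finsupp.equivFunOnFinite.symm α - Finsupp.single j 1 : Fin k →₀ ℕ) b
      = α b - if j = b then 1 else 0 := by
  rw [Finsupp.tsub_apply, Finsupp.single_apply]
  rfl

lemma single_add_sub_sub {k : ℕ} (α : Fin k → ℕ) (j b : Fin k) (hj : α j ≠ 0)
    (h2 : j = b → 2 ≤ α b) :
    Finsupp.single j 1
        + (Finsupp.equivFunOnFinite.symm α - Finsupp.single j 1 - Finsupp.single b 1)
      = Finsupp.equivFunOnFinite.symm α - Finsupp.single b 1 := by
  ext i
  simp only [Finsupp.add_apply, Finsupp.tsub_apply, Finsupp.single_apply,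
    Finsupp.coe_equivFunOnFinite_symm]
  rcases eq_or_ne j i with h | h
  · subst h
    rcases eq_or_ne b j with h' | h'
    · subst h'
      have h3 := h2 rfl
      simp only [if_pos rfl, eq_self_iff_true, if_true]
      omega
    · simp only [if_pos rfl, if_neg h', eq_self_iff_true, if_true]
      omega
  · simp only [if_neg h]
    omega

lemma Tm_monomial (k : ℕ) (hk : 2 ≤ k) (α : Fin k → ℕ) (c : ℝ) :
    Tm k hk 1 (monomial (Finsupp.equivFunOnFinite.symm α) c) =
      monomial (Finsupp.equivFunOnFinite.symm α - Finsupp.single (⟨0, by omega⟩ : Fin k) 2)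
        (c * ((α ⟨0, by omega⟩ * (α ⟨0, by omega⟩ - 1) : ℕ) : ℝ))
      - monomial (Finsupp.equivFunOnFinite.symm α - Finsupp.single (⟨1, by omega⟩ : Fin k) 1)
        (c * ((α ⟨1, by omega⟩ * ∑ j, α j : ℕ) : ℝ)) := by
  have hk0 : (0 : ℕ) < k := by omega
  have hk1 : (1 : ℕ) < k := by omega
  set i0 : Fin k := ⟨0, hk0⟩ with hi0
  set i1 : Fin k := ⟨1, hk1⟩ with hi1
  set D : Fin k →₀ ℕ := Finsupp.equivFunOnFinite.symm α with hD
  have h1 : pderiv i0 (pderiv i0 (monomial D c))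
      = monomial (D - Finsupp.single i0 2) (c * ((α i0 * (α i0 - 1) : ℕ) : ℝ)) := by
    simp only [pderiv_monomial]
    congr 1
    · rw [tsub_tsub, ← Finsupp.single_add]
    · rw [hD, sub_single_apply, if_pos rfl, Nat.cast_mul]
      show c * (α i0 : ℝ) * _ = _
      ring
  have h3 : C (1:ℝ) * pderiv i1 (monomial D c)
      = monomial (D - Finsupp.single i1 1) (c * ((α i1 : ℕ) : ℝ)) := by
    rw [C_1, one_mul, pderiv_monomial]
    rfl
  have h2 : ∀ j : Fin k, X j * pderiv i1 (pderiv j (monomial D c))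
      = monomial (D - Finsupp.single i1 1)
          (c * ((α j * (α i1 - if j = i1 then 1 else 0) : ℕ) : ℝ)) := by
    intro j
    simp only [pderiv_monomial]
    rw [X, monomial_mul, one_mul]
    by_cases hj : α j = 0
    · have e0 : D j = 0 := hj
      have e1 : c * (D j : ℝ) * (((D - Finsupp.single j 1 : Fin k →₀ ℕ) i1 : ℕ) : ℝ) = 0 := by
        rw [e0]; simp
      rw [e1, hj, monomial_zero, zero_mul, Nat.cast_zero, mul_zero, monomial_zero]
    by_cases hc : j = i1 ∧ α i1 = 1
    · have e1 : (D - Finsupp.single j 1 : Fin k →₀ ℕ) i1 = 0 := by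
        rw [hD, sub_single_apply, if_pos hc.1, hc.2]
      have e2 : α i1 - (if j = i1 then 1 else 0) = 0 := by
        rw [if_pos hc.1, hc.2]
      rw [show ((monomial (Finsupp.single j 1 + (D - Finsupp.single j 1 - Finsupp.single i1 1)))
            (c * (D j : ℝ) * (((D - Finsupp.single j 1 : Fin k →₀ ℕ) i1 : ℕ) : ℝ))) =
          (monomial (Finsupp.single j 1 + (D - Finsupp.single j 1 - Finsupp.single i1 1))) 0 by
        rw [e1]; push_cast; ring_nf]
      rw [e2, monomial_zero, Nat.mul_zero, Nat.cast_zero, mul_zero, monomial_zero]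
    · have h2' : j = i1 → 2 ≤ α i1 := by
        intro hji
        have hne1 : α i1 ≠ 1 := fun h => hc ⟨hji, h⟩
        have hne0 : α i1 ≠ 0 := by rw [← hji]; exact hj
        omega
      rw [hD, single_add_sub_sub α j i1 hj h2']
      congr 1
      rw [sub_single_apply, Nat.cast_mul]
      show c * (α j : ℝ) * _ = _
      ring
  rw [Tm, h1, Finset.sum_congr rfl (fun j _ => h2 j), ← map_sum, h3, sub_sub, ← map_add]
  congr 2
  rw [show ∑ j : Fin k, c * ((α j * (α i1 - if j = i1 then 1 else 0) : ℕ) : ℝ)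
      = c * ((∑ j, α j * (α i1 - if j = i1 then 1 else 0) : ℕ) : ℝ) by
    push_cast [Finset.mul_sum]; rfl]
  rw [← mul_add, ← Nat.cast_add, nat_sum_identity α i1]

lemma Tm_sum (k : ℕ) (hk : 2 ≤ k) (m : ℝ) {A : Type*} (s : Finset A)
    (f : A → MvPolynomial (Fin k) ℝ) :
    Tm k hk m (∑ a ∈ s, f a) = ∑ a ∈ s, Tm k hk m (f a) := by
  unfold Tm
  simp only [map_sum, Finset.mul_sum]
  rw [Finset.sum_comm]
  simp only [← Finset.sum_sub_distrib]

lemma mem_wipIndex {k n : ℕ} {α : Fin k → ℕ} : α ∈ wipIndex k n ↔ isoDeg α = n := by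
  constructor
  · exact fun h => (Finset.mem_filter.1 h).2
  · intro h
    refine Finset.mem_filter.2 ⟨Fintype.mem_piFinset.2 fun i => Finset.mem_range.2 ?_, h⟩
    have h1 : (i.1 + 1) * α i ≤ isoDeg α :=
      Finset.single_le_sum (f := fun i => (i.1 + 1) * α i) (fun _ _ => Nat.zero_le _)
        (Finset.mem_univ i)
    have h2 : α i ≤ (i.1 + 1) * α i := Nat.le_mul_of_pos_left _ (Nat.succ_pos _)
    omega

lemma isoDeg_add_single {k : ℕ} (β : Fin k → ℕ) (a : Fin k) (c : ℕ) :
    isoDeg (β + Pi.single a c) = isoDeg β + (a.1 + 1) * c := by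
  unfold isoDeg
  simp only [Pi.add_apply, Nat.mul_add, Finset.sum_add_distrib]
  congr 1
  rw [Finset.sum_eq_single a (fun i _ h => by simp [Pi.single_eq_of_ne, h]) (by simp)]
  simp

lemma reindex_single {k n : ℕ} (a : Fin k) (c : ℕ) (F : (Fin k → ℕ) → ℝ)
    (hF : ∀ α, α a < c → F α = 0) :
    ∑ α ∈ wipIndex k (n + (a.1 + 1) * c),
        monomial (Finsupp.equivFunOnFinite.symm α - Finsupp.single a c) (F α)
      = ∑ β ∈ wipIndex k n,
          monomial (Finsupp.equivFunOnFinite.symm β) (F (β + Pi.single a c)) := by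
  rw [← Finset.sum_filter_of_ne (p := fun α => c ≤ α a)
    (fun α _ hne => by by_contra h; exact hne (by rw [hF α (by omega)]; simp))]
  refine Finset.sum_bij' (fun α _ => α - Pi.single a c) (fun β _ => β + Pi.single a c)
    ?_ ?_ ?_ ?_ ?_
  · intro α hα
    rw [Finset.mem_filter] at hα
    have hc : c ≤ α a := hα.2
    have hiso := mem_wipIndex.1 hα.1
    have hsub : (α - Pi.single a c) + Pi.single a c = α := by
      funext i
      rcases eq_or_ne i a with rfl | h
      · simp only [Pi.add_apply, Pi.sub_apply, Pi.single_eq_same]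
        omega
      · simp only [Pi.add_apply, Pi.sub_apply, Pi.single_eq_of_ne h]
        omega
    apply mem_wipIndex.2
    have h2 := isoDeg_add_single (α - Pi.single a c) a c
    rw [hsub] at h2
    have h3 : isoDeg (α - Pi.single a c) + (a.1 + 1) * c = n + (a.1 + 1) * c := by
      rw [← h2, hiso]
    exact Nat.add_right_cancel h3
  · intro β hβ
    rw [Finset.mem_filter]
    refine ⟨mem_wipIndex.2 ?_, ?_⟩
    · rw [isoDeg_add_single, mem_wipIndex.1 hβ]
    · simp [Pi.single_eq_same]
  · intro α hα
    have hc : c ≤ α a := (Finset.mem_filter.1 hα).2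
    funext i
    rcases eq_or_ne i a with rfl | h
    · simp only [Pi.add_apply, Pi.sub_apply, Pi.single_eq_same]; omega
    · simp only [Pi.add_apply, Pi.sub_apply, Pi.single_eq_of_ne h]; omega
  · intro β hβ
    funext i
    rcases eq_or_ne i a with rfl | h
    · simp only [Pi.add_apply, Pi.sub_apply, Pi.single_eq_same]; omega
    · simp only [Pi.add_apply, Pi.sub_apply, Pi.single_eq_of_ne h]; omega
  · intro α hα
    have hc : c ≤ α a := (Finset.mem_filter.1 hα).2
    have hsub : (α - Pi.single a c) + Pi.single a c = α := by
      funext i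
      rcases eq_or_ne i a with rfl | h
      · simp only [Pi.add_apply, Pi.sub_apply, Pi.single_eq_same]; omega
      · simp only [Pi.add_apply, Pi.sub_apply, Pi.single_eq_of_ne h]; omega
    rw [hsub]
    have hexp : Finsupp.equivFunOnFinite.symm α - Finsupp.single a c
        = Finsupp.equivFunOnFinite.symm (α - Pi.single a c) := by
      ext i
      simp only [Finsupp.tsub_apply, Finsupp.single_apply,
        Finsupp.coe_equivFunOnFinite_symm, Pi.sub_apply, Pi.single_apply]
      rcases eq_or_ne a i with rfl | h
      · simp only [if_pos rfl, eq_self_iff_true, if_true]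
      · simp only [if_neg h, if_neg (fun h' : i = a => h h'.symm)]
    rw [hexp]

lemma nat_sum_add_single {k : ℕ} (β : Fin k → ℕ) (a : Fin k) (c : ℕ) :
    ∑ i, (β + Pi.single a c : Fin k → ℕ) i = (∑ i, β i) + c := by
  simp [Finset.sum_add_distrib, Finset.sum_pi_single']

lemma Tm_WIP (k : ℕ) (hk : 2 ≤ k) (ω : Fin k → ℝ) (n : ℕ) :
    Tm k hk 1 (WIP k (n + 2) ω)
      = ∑ β ∈ wipIndex k n, monomial (Finsupp.equivFunOnFinite.symm β)
          ((2 * ω ⟨0, by omega⟩ - ω ⟨1, by omega⟩) *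
            ((((∑ i, β i) + 1) * Nat.multinomial Finset.univ β : ℕ) : ℝ)) := by
  have hk0 : (0 : ℕ) < k := by omega
  have hk1 : (1 : ℕ) < k := by omega
  set i0 : Fin k := ⟨0, hk0⟩ with hi0
  set i1 : Fin k := ⟨1, hk1⟩ with hi1
  rw [WIP, Tm_sum, Finset.sum_congr rfl (fun α _ => Tm_monomial k hk α (Aw ω α)),
    Finset.sum_sub_distrib]
  have e1 : ∑ α ∈ wipIndex k (n + 2),
        monomial (Finsupp.equivFunOnFinite.symm α - Finsupp.single i0 2)
          (Aw ω α * ((α i0 * (α i0 - 1) : ℕ) : ℝ))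
      = ∑ β ∈ wipIndex k n, monomial (Finsupp.equivFunOnFinite.symm β)
          (Aw ω (β + Pi.single i0 2) *
            (((β + Pi.single i0 2 : Fin k → ℕ) i0 * ((β + Pi.single i0 2 : Fin k → ℕ) i0 - 1) : ℕ) : ℝ)) :=
    reindex_single i0 2 (fun α => Aw ω α * ((α i0 * (α i0 - 1) : ℕ) : ℝ)) (fun α h => by
      have h' : α i0 = 0 ∨ α i0 = 1 := by omega
      rcases h' with h' | h' <;> simp [h'])
  have e2 : ∑ α ∈ wipIndex k (n + 2),
        monomial (Finsupp.equivFunOnFinite.symm α - Finsupp.single i1 1)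
          (Aw ω α * ((α i1 * ∑ j, α j : ℕ) : ℝ))
      = ∑ β ∈ wipIndex k n, monomial (Finsupp.equivFunOnFinite.symm β)
          (Aw ω (β + Pi.single i1 1) *
            (((β + Pi.single i1 1 : Fin k → ℕ) i1 * ∑ j, (β + Pi.single i1 1 : Fin k → ℕ) j : ℕ) : ℝ)) :=
    reindex_single i1 1 (fun α => Aw ω α * ((α i1 * ∑ j, α j : ℕ) : ℝ)) (fun α h => by
      have h' : α i1 = 0 := by omega
      simp [h'])
  rw [e1, e2, ← Finset.sum_sub_distrib]
  refine Finset.sum_congr rfl fun β hβ => ?_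
  rw [← map_sub]
  congr 1
  have v0 : (β + Pi.single i0 2 : Fin k → ℕ) i0 = β i0 + 2 := by
    simp [Pi.single_eq_same]
  have v1 : (β + Pi.single i1 1 : Fin k → ℕ) i1 = β i1 + 1 := by
    simp [Pi.single_eq_same]
  rw [v0, v1, nat_sum_add_single]
  have : β i0 + 2 - 1 = β i0 + 1 := rfl
  rw [this]
  exact bracket ω i0 i1 β

lemma Tm_WIP_one (k : ℕ) (hk : 2 ≤ k) (ω : Fin k → ℝ) :
    Tm k hk 1 (WIP k 1 ω) = 0 := by
  have hk0 : (0 : ℕ) < k := by omega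
  have hk1 : (1 : ℕ) < k := by omega
  rw [WIP, Tm_sum]
  apply Finset.sum_eq_zero
  intro α hα
  rw [Tm_monomial]
  have hiso := mem_wipIndex.1 hα
  have h0 : ((⟨0, hk0⟩ : Fin k).1 + 1) * α ⟨0, hk0⟩ ≤ isoDeg α :=
    Finset.single_le_sum (f := fun i => (i.1 + 1) * α i) (fun _ _ => Nat.zero_le _)
      (Finset.mem_univ _)
  have h1 : ((⟨1, hk1⟩ : Fin k).1 + 1) * α ⟨1, hk1⟩ ≤ isoDeg α :=
    Finset.single_le_sum (f := fun i => (i.1 + 1) * α i) (fun _ _ => Nat.zero_le _)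
      (Finset.mem_univ _)
  have hα0 : α ⟨0, hk0⟩ ≤ 1 := by simp only [hiso] at h0; omega
  have hα1 : α ⟨1, hk1⟩ = 0 := by simp only [hiso] at h1; omega
  have z0 : α ⟨0, hk0⟩ * (α ⟨0, hk0⟩ - 1) = 0 := by
    rcases Nat.le_one_iff_eq_zero_or_eq_one.mp hα0 with h | h <;> simp [h]
  have z1 : α ⟨1, hk1⟩ * ∑ j, α j = 0 := by rw [hα1]; simp
  rw [z0, z1]
  simp

lemma wipIndex_zero (k : ℕ) : wipIndex k 0 = {fun _ => 0} := by
  ext γ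
  rw [Finset.mem_singleton, mem_wipIndex]
  constructor
  · intro h
    funext i
    have hp : (i.1 + 1) * γ i ≤ isoDeg γ :=
      Finset.single_le_sum (f := fun i => (i.1 + 1) * γ i) (fun _ _ => Nat.zero_le _)
        (Finset.mem_univ i)
    rw [h] at hp
    have : (i.1 + 1) * γ i = 0 := by omega
    rcases Nat.mul_eq_zero.mp this with h' | h'
    · omega
    · exact h'
  · intro h
    rw [h]
    simp [isoDeg]

lemma multinomial_zero_fun (k : ℕ) : Nat.multinomial Finset.univ (fun _ : Fin k => 0) = 1 := by
  have h := Nat.multinomial_spec (Finset.univ : Finset (Fin k)) (fun _ => 0)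
  simpa using h

/-- Corollary 4.2 (1): `T_1(P_{n,ω}) = 0` for all `n ≥ 1` iff `ω₂ = 2ω₁`. -/
theorem ker_T1_iff (k : ℕ) (hk : 2 ≤ k) (ω : Fin k → ℝ) :
    (∀ n, 1 ≤ n → Tm k hk 1 (WIP k n ω) = 0) ↔
      ω (⟨1, by omega⟩ : Fin k) = 2 * ω (⟨0, by omega⟩ : Fin k) := by
  have hk0 : (0 : ℕ) < k := by omega
  have hk1 : (1 : ℕ) < k := by omega
  constructor
  · intro h
    have h2 := h 2 (by norm_num)
    have h3 := Tm_WIP k hk ω 0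
    rw [show (0 + 2 : ℕ) = 2 from rfl] at h3
    rw [h3, wipIndex_zero, Finset.sum_singleton] at h2
    have hE : (Finsupp.equivFunOnFinite.symm (fun _ : Fin k => 0)) = 0 := by
      ext i; simp
    rw [hE, multinomial_zero_fun] at h2
    simp only [monomial_zero'] at h2
    have h4 := congrArg (coeff 0) h2
    rw [coeff_C, coeff_zero] at h4
    simp at h4
    linarith
  · intro h n hn
    match n, hn with
    | 1, _ => exact Tm_WIP_one k hk ω
    | (m + 2), _ =>
      rw [Tm_WIP k hk ω m]
      apply Finset.sum_eq_zero
      intro β _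
      rw [h]
      ring_nf
      simp
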